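/- Let a,b,c,d > 0 and e be real, and let 0 < s < 1 and 0 < t < 1-s. Then I₁(s,t) := ∫_0^t (∫_0^s u^{a-1} (s-u)^{c-1} (1-u-v)^{-e} du) v^{b-1} (t-v)^{d-1} dv = B(a,c) B(b,d) s^{a+c-1} t^{b+d-1} · F₂(e; a, b; a+c, b+d; s, t), the F₂ series converging since s+t < 1. -/

import Mathlib

open Real intervalIntegral

/-- The Pochhammer symbol `(a)_k = a(a+1)⋯(a+k-1) = Γ(a+k)/Γ(a)`. -/
noncomputable def poch (a : ℝ) (k : ℕ) : ℝ := ∏ i ∈ Finset.range k, (a + (i : ℝ))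

/-- The Beta function `B(x,y) = Γ(x)Γ(y)/Γ(x+y)`. -/
noncomputable def Beta2 (x y : ℝ) : ℝ := Real.Gamma x * Real.Gamma y / Real.Gamma (x + y)

/-- Extended Beta function `B(x,y,z) = Γ(x)Γ(y)Γ(z)/Γ(x+y+z)`. -/
noncomputable def Beta3 (x y z : ℝ) : ℝ :=
  Real.Gamma x * Real.Gamma y * Real.Gamma z / Real.Gamma (x + y + z)

/-- The second Appell hypergeometric function
`F₂(a; b₁,b₂; c₁,c₂; x,y) = Σ_{i,j} (a)_{i+j}(b₁)_i(b₂)_j/((c₁)_i(c₂)_j i! j!) xⁱ yʲ`. -/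
noncomputable def F2 (a b₁ b₂ c₁ c₂ x y : ℝ) : ℝ :=
  ∑' (i : ℕ) (j : ℕ),
    poch a (i + j) * poch b₁ i * poch b₂ j /
      (poch c₁ i * poch c₂ j * (Nat.factorial i : ℝ) * (Nat.factorial j : ℝ)) * x ^ i * y ^ j

section Helpers
open Real

lemma rpow_shift {w : ℝ} (hw : 0 < w) (e : ℝ) (i : ℕ) :
    w ^ (-e) * (w ^ i)⁻¹ = w ^ (-e - i) := by
  rw [← Real.rpow_natCast w i, ← Real.rpow_neg (le_of_lt hw), ← Real.rpow_add hw]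
  congr 1 <;> ring

lemma rpow_neg_natCast {w : ℝ} (hw : 0 < w) (i : ℕ) :
    w ^ (-(i:ℝ)) = (w ^ i)⁻¹ := by
  rw [Real.rpow_neg (le_of_lt hw), Real.rpow_natCast]

lemma rpow_split {s : ℝ} (hs : 0 < s) (x : ℝ) (i : ℕ) :
    s ^ (x + i) = s ^ x * s ^ i := by
  rw [Real.rpow_add hs, Real.rpow_natCast]

end Helpers



open Real Filter

lemma poch_zero (a : ℝ) : poch a 0 = 1 := by simp [poch]

lemma poch_succ (a : ℝ) (k : ℕ) : poch a (k + 1) = poch a k * (a + k) :=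
  Finset.prod_range_succ _ _

lemma poch_pos {a : ℝ} (ha : 0 < a) (k : ℕ) : 0 < poch a k := by
  refine Finset.prod_pos fun i _ => by positivity

lemma poch_add (e : ℝ) (i j : ℕ) : poch e (i + j) = poch e i * poch (e + i) j := by
  rw [poch, poch, poch, Finset.prod_range_add]
  congr 1
  exact Finset.prod_congr rfl fun k _ => by push_cast; ring

lemma abs_poch_le (e : ℝ) (k : ℕ) : |poch e k| ≤ poch (|e| + 1) k := by
  rw [poch, Finset.abs_prod]
  refine Finset.prod_le_prod (fun i _ => abs_nonneg _) fun i _ => ?_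
  have h1 : |e + (i:ℝ)| ≤ |e| + |(i:ℝ)| := abs_add_le _ _
  have h2 : |(i:ℝ)| = (i:ℝ) := Nat.abs_cast i
  linarith

lemma poch_le_poch {a : ℝ} (ha : 0 < a) {c : ℝ} (hc : 0 ≤ c) (k : ℕ) :
    poch a k ≤ poch (a + c) k := by
  refine Finset.prod_le_prod (fun i _ => by positivity) fun i _ => by linarith

/-- Ratio-test summability for `poch q (n+m)/n! * x^n`. -/
lemma summable_poch_mul {q x : ℝ} (hq : 0 < q) (hx0 : 0 < x) (hx1 : x < 1) (m : ℕ) :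
    Summable (fun n : ℕ => poch q (n + m) / (Nat.factorial n : ℝ) * x ^ n) := by
  have hne : ∀ n : ℕ, poch q (n + m) / (Nat.factorial n : ℝ) * x ^ n ≠ 0 := fun n => by
    have h1 := poch_pos hq (n + m)
    have h2 : (0:ℝ) < Nat.factorial n := by positivity
    positivity
  refine summable_of_ratio_test_tendsto_lt_one hx1 (Eventually.of_forall hne) ?_
  have key : ∀ n : ℕ, ‖poch q (n + 1 + m) / (Nat.factorial (n+1) : ℝ) * x ^ (n+1)‖ /
      ‖poch q (n + m) / (Nat.factorial n : ℝ) * x ^ n‖ = (q + (n + m)) * x / (n + 1) := by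
    intro n
    have h1 := poch_pos hq (n + m)
    have h2 : (0:ℝ) < Nat.factorial n := by positivity
    have h3 : (0:ℝ) < x ^ n := by positivity
    have hsucc : poch q (n + 1 + m) = poch q (n + m) * (q + (n + m)) := by
      have : n + 1 + m = (n + m) + 1 := by ring
      rw [this, poch_succ]; push_cast; ring
    rw [hsucc, Real.norm_eq_abs, Real.norm_eq_abs, abs_of_pos (by positivity),
      abs_of_pos (by positivity)]
    rw [Nat.factorial_succ]
    push_cast
    field_simp
    ring
  simp_rw [key]
  have h0 : Tendsto (fun n : ℕ => (q + m - 1) / (n + 1 : ℝ)) atTop (nhds 0) := by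
    have := (tendsto_const_div_atTop_nhds_zero_nat (q + m - 1)).comp
      (tendsto_add_atTop_nat 1)
    refine this.congr fun n => ?_
    push_cast [Function.comp]
    ring
  have : Tendsto (fun n : ℕ => ((q + m - 1) / (n + 1 : ℝ) + 1) * x) atTop (nhds x) := by
    have := (h0.add (tendsto_const_nhds (x := (1:ℝ)))).mul_const x
    simpa using this
  refine this.congr fun n => ?_
  have : (0:ℝ) < n + 1 := by positivity
  field_simp
  ring

lemma summable_abs_poch (e : ℝ) {x : ℝ} (hx0 : 0 < x) (hx1 : x < 1) :
    Summable (fun n : ℕ => |poch e n| / (Nat.factorial n : ℝ) * x ^ n) := by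
  refine Summable.of_nonneg_of_le (fun n => by positivity) (fun n => ?_)
    ((summable_poch_mul (q := |e| + 1) (by positivity) hx0 hx1 0).congr fun n => by rw [Nat.add_zero])
  have h2 : (0:ℝ) < Nat.factorial n := by positivity
  have h3 : (0:ℝ) < x ^ n := by positivity
  have := abs_poch_le e n
  gcongr

lemma summable_poch_div (e : ℝ) {x : ℝ} (hx0 : 0 < x) (hx1 : x < 1) :
    Summable (fun n : ℕ => poch e n / (Nat.factorial n : ℝ) * x ^ n) := by
  refine Summable.of_abs (((summable_abs_poch e hx0 hx1)).congr fun n => ?_)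
  have h2 : (0:ℝ) < Nat.factorial n := by positivity
  have h3 : (0:ℝ) ≤ x ^ n := by positivity
  rw [abs_mul, abs_div, abs_of_nonneg h3, abs_of_pos h2]

section Binomial
open Real Filter Finset

lemma binom_deriv_aux {c : ℕ → ℝ} {e : ℝ}
    (hrec : ∀ k : ℕ, ((k:ℝ) + 1) * c (k + 1) = (e + k) * c k) (ξ : ℝ) : ∀ n : ℕ,
    (1 - ξ) * (∑ k ∈ range (n + 1), c k * ((k : ℝ) * ξ ^ (k - 1)))
      - e * (∑ k ∈ range (n + 1), c k * ξ ^ k)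
    = -(((n : ℝ) + 1) * c (n + 1) * ξ ^ n) := by
  intro n
  induction n with
  | zero =>
    have h := hrec 0
    simp only [zero_add, range_one, sum_singleton, Nat.cast_zero, Nat.cast_one, zero_mul,
      mul_zero, mul_one, pow_zero, add_zero, one_mul] at h ⊢
    linarith
  | succ n ih =>
    rw [sum_range_succ, sum_range_succ (f := fun k => c k * ξ ^ k)]
    have h := hrec (n + 1)
    push_cast [Nat.add_sub_cancel] at h ⊢
    linear_combination ih + ξ ^ (n + 1) * h

lemma hasSum_binomial (e : ℝ) {x : ℝ} (hx0 : 0 < x) (hx1 : x < 1) :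
    HasSum (fun k : ℕ => poch e k / (Nat.factorial k : ℝ) * x ^ k) ((1 - x) ^ (-e : ℝ)) := by
  set c : ℕ → ℝ := fun k => poch e k / (Nat.factorial k : ℝ) with hc
  have hrec : ∀ k : ℕ, ((k:ℝ) + 1) * c (k + 1) = (e + k) * c k := by
    intro k
    have hf : (0:ℝ) < Nat.factorial k := by positivity
    simp only [hc, poch_succ, Nat.factorial_succ]
    push_cast
    field_simp
  have hsum : Summable (fun k : ℕ => c k * x ^ k) := summable_poch_div e hx0 hx1
  rw [hsum.hasSum_iff_tendsto_nat]
  have h1x : (0:ℝ) < 1 - x := by linarith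
  set M : ℝ := max 1 ((1 - x) ^ (e - 1)) with hM
  have hM0 : 0 < M := lt_of_lt_of_le one_pos (le_max_left _ _)
  -- the key remainder bound
  have hbound : ∀ n : ℕ,
      |(1 - x) ^ e * (∑ k ∈ Finset.range (n + 1), c k * x ^ k) - 1|
        ≤ M * (((n:ℝ) + 1) * |c (n + 1)| * x ^ n) * x := by
    intro n
    set f : ℝ → ℝ := fun y => (1 - y) ^ e * ∑ k ∈ Finset.range (n + 1), c k * y ^ k with hf
    set f' : ℝ → ℝ := fun y => (1 - y) ^ (e - 1) * (-(((n:ℝ) + 1) * c (n + 1) * y ^ n)) with hf'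
    have hderiv : ∀ y ∈ Set.Icc (0:ℝ) x, HasDerivAt f (f' y) y := by
      intro y hy
      have h1y : (0:ℝ) < 1 - y := by
        rcases hy with ⟨_, hy2⟩; linarith
      have hd1 : HasDerivAt (fun y : ℝ => (1 - y) ^ e) ((-1) * e * (1 - y) ^ (e - 1)) y :=
        ((hasDerivAt_id y).const_sub 1).rpow_const (Or.inl (ne_of_gt h1y))
      have hd2 : HasDerivAt (fun y : ℝ => ∑ k ∈ Finset.range (n + 1), c k * y ^ k)
          (∑ k ∈ Finset.range (n + 1), c k * ((k:ℝ) * y ^ (k - 1))) y := by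
        refine HasDerivAt.fun_sum fun k _ => ?_
        simpa using (hasDerivAt_pow k y).const_mul (c k)
      have hprod : HasDerivAt f _ y := hd1.fun_mul hd2
      convert hprod using 1
      have hsplit : (1 - y) ^ e = (1 - y) ^ (e - 1) * (1 - y) := by
        have h := Real.rpow_add h1y (e - 1) 1
        rw [Real.rpow_one] at h
        rw [show e - 1 + 1 = e by ring] at h
        exact h
      rw [hsplit]
      beta_reduce
      linear_combination (-((1 - y) ^ (e - 1))) * binom_deriv_aux hrec y n
    have hderiv' : ∀ y ∈ Set.Icc (0:ℝ) x, HasDerivWithinAt f (f' y) (Set.Icc 0 x) y :=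
      fun y hy => (hderiv y hy).hasDerivWithinAt
    have hbd : ∀ y ∈ Set.Ico (0:ℝ) x, ‖f' y‖ ≤ M * (((n:ℝ) + 1) * |c (n + 1)| * x ^ n) := by
      intro y hy
      rcases hy with ⟨hy0, hy1⟩
      have h1y : (0:ℝ) < 1 - y := by linarith
      have hbase : (1 - y) ^ (e - 1) ≤ M := by
        rcases le_or_gt 0 (e - 1) with he | he
        · refine le_trans (Real.rpow_le_one (by linarith) (by linarith) he) (le_max_left _ _)
        · refine le_trans ?_ (le_max_right _ _)
          exact Real.rpow_le_rpow_of_nonpos h1x (by linarith) (le_of_lt he)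
      have hys : y ^ n ≤ x ^ n := pow_le_pow_left₀ hy0 (le_of_lt hy1) n
      have hb0 : (0:ℝ) ≤ (1 - y) ^ (e - 1) := Real.rpow_nonneg (by linarith) _
      rw [hf', Real.norm_eq_abs, abs_mul, abs_neg, abs_of_nonneg hb0]
      rw [abs_mul, abs_mul, abs_of_nonneg (by positivity : (0:ℝ) ≤ (n:ℝ) + 1),
        abs_of_nonneg (by positivity : (0:ℝ) ≤ y ^ n)]
      have hmono : ((n:ℝ) + 1) * |c (n + 1)| * y ^ n ≤ ((n:ℝ) + 1) * |c (n + 1)| * x ^ n := by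
        gcongr
      exact mul_le_mul hbase hmono (by positivity) (le_of_lt hM0)
    have key := norm_image_sub_le_of_norm_deriv_le_segment' hderiv' hbd x
      (Set.right_mem_Icc.mpr (le_of_lt hx0))
    have hf0 : f 0 = 1 := by
      rw [hf]
      simp only [sub_zero, Real.one_rpow, one_mul]
      rw [Finset.sum_eq_single 0]
      · simp [hc, poch_zero]
      · intro k _ hk
        simp [zero_pow hk]
      · intro h
        exact absurd (Finset.mem_range.mpr (Nat.succ_pos n)) h
    rw [hf0] at key
    simpa [Real.norm_eq_abs] using key
  -- the remainder tends to zero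
  have htend0 : Tendsto (fun n : ℕ => M * (((n:ℝ) + 1) * |c (n + 1)| * x ^ n) * x) atTop (nhds 0) := by
    have hmaj : Summable (fun n : ℕ => poch (|e| + 1) (n + 1) / (Nat.factorial n : ℝ) * x ^ n) :=
      summable_poch_mul (by positivity) hx0 hx1 1
    have htz : Tendsto (fun n : ℕ => poch (|e| + 1) (n + 1) / (Nat.factorial n : ℝ) * x ^ n)
        atTop (nhds 0) := hmaj.tendsto_atTop_zero
    have hsq : Tendsto (fun n : ℕ => ((n:ℝ) + 1) * |c (n + 1)| * x ^ n) atTop (nhds 0) := by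
      refine squeeze_zero (fun n => by positivity) (fun n => ?_) htz
      have h1 : ((n:ℝ) + 1) * |c (n + 1)| = |poch e (n + 1)| / (Nat.factorial n : ℝ) := by
        have hfn : (0:ℝ) < Nat.factorial n := by positivity
        have habs : |c (n + 1)| = |poch e (n + 1)| / ((Nat.factorial (n + 1) : ℝ)) := by
          rw [hc]
          rw [abs_div, Nat.abs_cast]
        rw [habs, Nat.factorial_succ]
        push_cast
        rw [eq_div_iff hfn.ne']
        field_simp
      rw [h1]
      have := abs_poch_le e (n + 1)
      have hfn : (0:ℝ) < Nat.factorial n := by positivity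
      have hxn : (0:ℝ) < x ^ n := by positivity
      gcongr
    have := (hsq.const_mul M).mul_const x
    simpa using this
  have hmain : Tendsto (fun n : ℕ => (1 - x) ^ e * (∑ k ∈ Finset.range (n + 1), c k * x ^ k))
      atTop (nhds 1) := by
    rw [tendsto_iff_norm_sub_tendsto_zero]
    refine squeeze_zero (fun n => norm_nonneg _) (fun n => ?_) htend0
    simpa [Real.norm_eq_abs] using hbound n
  have hne : (1 - x) ^ e ≠ 0 := ne_of_gt (Real.rpow_pos_of_pos h1x e)
  have hmul : Tendsto (fun n : ℕ => (∑ k ∈ Finset.range (n + 1), c k * x ^ k))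
      atTop (nhds ((1 - x) ^ (-e : ℝ))) := by
    have h2 := hmain.mul_const ((1 - x) ^ (-e : ℝ))
    have hco : ∀ n : ℕ, (1 - x) ^ e * (∑ k ∈ Finset.range (n + 1), c k * x ^ k)
        * (1 - x) ^ (-e : ℝ) = ∑ k ∈ Finset.range (n + 1), c k * x ^ k := by
      intro n
      have : (1 - x) ^ e * (1 - x) ^ (-e : ℝ) = 1 := by
        rw [← Real.rpow_add h1x]; simp
      calc (1 - x) ^ e * (∑ k ∈ Finset.range (n + 1), c k * x ^ k) * (1 - x) ^ (-e : ℝ)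
          = ((1 - x) ^ e * (1 - x) ^ (-e : ℝ)) * ∑ k ∈ Finset.range (n + 1), c k * x ^ k := by ring
        _ = ∑ k ∈ Finset.range (n + 1), c k * x ^ k := by rw [this]; ring
    rw [show nhds ((1 - x) ^ (-e:ℝ)) = nhds (1 * (1 - x) ^ (-e:ℝ)) by rw [one_mul]]
    exact h2.congr hco
  have := (tendsto_add_atTop_iff_nat (f := fun n => ∑ k ∈ Finset.range n, c k * x ^ k)
    (l := nhds ((1 - x) ^ (-e:ℝ))) 1).mp ?_
  · exact this
  · exact hmul

end Binomial

section Beta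
open Real MeasureTheory intervalIntegral Set

lemma Beta2_pos {p q : ℝ} (hp : 0 < p) (hq : 0 < q) : 0 < Beta2 p q := by
  unfold Beta2
  have := Real.Gamma_pos_of_pos hp
  have := Real.Gamma_pos_of_pos hq
  have := Real.Gamma_pos_of_pos (by linarith : 0 < p + q)
  positivity

lemma Gamma_add_nat {p : ℝ} (hp : 0 < p) (n : ℕ) :
    Real.Gamma (p + n) = Real.Gamma p * poch p n := by
  induction n with
  | zero => simp [poch_zero]
  | succ n ih =>
    have hpn : (0:ℝ) < p + n := by positivity
    have h : p + ((n : ℕ) + 1 : ℕ) = (p + n) + 1 := by push_cast; ring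
    rw [h, Real.Gamma_add_one hpn.ne', ih, poch_succ]
    ring

lemma Beta2_shift {p q : ℝ} (hp : 0 < p) (hq : 0 < q) (n : ℕ) :
    Beta2 (p + n) q = Beta2 p q * (poch p n / poch (p + q) n) := by
  have hpq : (0:ℝ) < p + q := by linarith
  unfold Beta2
  rw [show p + (n:ℝ) + q = (p + q) + n by ring, Gamma_add_nat hp, Gamma_add_nat hpq]
  have h1 := (Real.Gamma_pos_of_pos hpq).ne'
  have h2 := (poch_pos hpq n).ne'
  field_simp

/-- pointwise match of the real and complex Beta integrands on `[0,1]`. -/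
private lemma beta_ptwise {p q : ℝ} (x : ℝ) (hx : x ∈ Icc (0:ℝ) 1) :
    ((x ^ (p - 1) * (1 - x) ^ (q - 1) : ℝ) : ℂ)
      = (x : ℂ) ^ ((p : ℂ) - 1) * (1 - (x : ℂ)) ^ ((q : ℂ) - 1) := by
  rw [Complex.ofReal_mul, Complex.ofReal_cpow hx.1 (p - 1),
    Complex.ofReal_cpow (by linarith [hx.2] : (0:ℝ) ≤ 1 - x) (q - 1)]
  push_cast
  ring

lemma beta01_intervalIntegrable {p q : ℝ} (hp : 0 < p) (hq : 0 < q) :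
    IntervalIntegrable (fun x : ℝ => x ^ (p - 1) * (1 - x) ^ (q - 1)) volume 0 1 := by
  have hci := Complex.betaIntegral_convergent (u := (p:ℂ)) (v := (q:ℂ)) (by simpa) (by simpa)
  rw [intervalIntegrable_iff] at hci ⊢
  refine (hci.re).congr ?_
  refine ae_restrict_of_forall_mem measurableSet_uIoc fun x hx => ?_
  rw [Set.uIoc_of_le (by norm_num : (0:ℝ) ≤ 1)] at hx
  have hx' : x ∈ Icc (0:ℝ) 1 := ⟨le_of_lt hx.1, hx.2⟩
  show RCLike.re ((x:ℂ) ^ ((p:ℂ) - 1) * (1 - (x:ℂ)) ^ ((q:ℂ) - 1)) = x ^ (p - 1) * (1 - x) ^ (q - 1)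
  rw [← beta_ptwise x hx']
  simp [RCLike.re_to_complex]

lemma beta01_integral {p q : ℝ} (hp : 0 < p) (hq : 0 < q) :
    ∫ x in (0:ℝ)..1, x ^ (p - 1) * (1 - x) ^ (q - 1) = Beta2 p q := by
  have key := Complex.Gamma_mul_Gamma_eq_betaIntegral
    (s := (p:ℂ)) (t := (q:ℂ)) (by simpa) (by simpa)
  rw [Complex.betaIntegral] at key
  have hcongr : (∫ x in (0:ℝ)..1, (x : ℂ) ^ ((p:ℂ) - 1) * (1 - (x:ℂ)) ^ ((q:ℂ) - 1))
      = ((∫ x in (0:ℝ)..1, x ^ (p - 1) * (1 - x) ^ (q - 1) : ℝ) : ℂ) := by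
    rw [← intervalIntegral.integral_ofReal]
    refine intervalIntegral.integral_congr fun x hx => ?_
    rw [Set.uIcc_of_le (by norm_num : (0:ℝ) ≤ 1)] at hx
    exact (beta_ptwise x hx).symm
  rw [hcongr] at key
  have hkey : ((Real.Gamma p * Real.Gamma q : ℝ) : ℂ)
      = ((Real.Gamma (p + q) * ∫ x in (0:ℝ)..1, x ^ (p - 1) * (1 - x) ^ (q - 1) : ℝ) : ℂ) := by
    push_cast
    rw [← Complex.Gamma_ofReal, ← Complex.Gamma_ofReal, ← Complex.Gamma_ofReal]
    push_cast
    exact key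
  have hreal := Complex.ofReal_inj.mp hkey
  have hG := (Real.Gamma_pos_of_pos (by linarith : (0:ℝ) < p + q)).ne'
  unfold Beta2
  rw [hreal]
  field_simp

lemma beta_scaled_intervalIntegrable {p q : ℝ} (hp : 0 < p) (hq : 0 < q)
    {s : ℝ} (hs : 0 < s) :
    IntervalIntegrable (fun u : ℝ => u ^ (p - 1) * (s - u) ^ (q - 1)) volume 0 s := by
  have h01 := beta01_intervalIntegrable hp hq
  have hcomp := (h01.comp_mul_left (c := s⁻¹)).const_mul (s ^ (p + q - 2))
  have he : (0:ℝ) / s⁻¹ = 0 := by simp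
  have he' : (1:ℝ) / s⁻¹ = s := by field_simp
  rw [he, he'] at hcomp
  rw [intervalIntegrable_iff] at hcomp ⊢
  refine hcomp.congr ?_
  refine ae_restrict_of_forall_mem measurableSet_uIoc fun u hu => ?_
  rw [Set.uIoc_of_le (le_of_lt hs)] at hu
  have hu0 : 0 < u := hu.1
  have hus : u ≤ s := hu.2
  have h1 : s⁻¹ * u = u / s := by ring
  have h2 : (1 - u / s) = (s - u) / s := by field_simp
  have h3 : (u / s) ^ (p - 1) = u ^ (p - 1) * (s ^ (p - 1))⁻¹ := by
    rw [div_rpow (le_of_lt hu0) (le_of_lt hs)]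
    ring
  have h4 : ((s - u) / s) ^ (q - 1) = (s - u) ^ (q - 1) * (s ^ (q - 1))⁻¹ := by
    rw [div_rpow (by linarith) (le_of_lt hs)]
    ring
  have h5 : s ^ (p + q - 2) * ((s ^ (p - 1))⁻¹ * (s ^ (q - 1))⁻¹) = 1 := by
    rw [← Real.rpow_neg (le_of_lt hs) (p - 1), ← Real.rpow_neg (le_of_lt hs) (q - 1),
      ← Real.rpow_add hs, ← Real.rpow_add hs,
      show p + q - 2 + (-(p - 1) + -(q - 1)) = 0 by ring, Real.rpow_zero]
  show s ^ (p + q - 2) * ((s⁻¹ * u) ^ (p - 1) * (1 - s⁻¹ * u) ^ (q - 1))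
      = u ^ (p - 1) * (s - u) ^ (q - 1)
  rw [h1, h2, h3, h4]
  calc s ^ (p + q - 2) * (u ^ (p - 1) * (s ^ (p - 1))⁻¹ * ((s - u) ^ (q - 1) * (s ^ (q - 1))⁻¹))
      = (s ^ (p + q - 2) * ((s ^ (p - 1))⁻¹ * (s ^ (q - 1))⁻¹)) * (u ^ (p - 1) * (s - u) ^ (q - 1)) := by
        ring
    _ = u ^ (p - 1) * (s - u) ^ (q - 1) := by rw [h5]; ring

lemma beta_scaled_integral {p q : ℝ} (hp : 0 < p) (hq : 0 < q) {s : ℝ} (hs : 0 < s) :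
    ∫ u in (0:ℝ)..s, u ^ (p - 1) * (s - u) ^ (q - 1) = Beta2 p q * s ^ (p + q - 1) := by
  have hsub := intervalIntegral.integral_comp_mul_left
    (a := (0:ℝ)) (b := (1:ℝ)) (fun u => u ^ (p - 1) * (s - u) ^ (q - 1)) hs.ne'
  rw [mul_zero, mul_one] at hsub
  have hmid : ∫ x in (0:ℝ)..1, (s * x) ^ (p - 1) * (s - s * x) ^ (q - 1)
      = s ^ (p + q - 2) * Beta2 p q := by
    have hcongr : ∀ x ∈ Set.uIcc (0:ℝ) 1,
        (s * x) ^ (p - 1) * (s - s * x) ^ (q - 1)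
          = s ^ (p + q - 2) * (x ^ (p - 1) * (1 - x) ^ (q - 1)) := by
      intro x hx
      rw [Set.uIcc_of_le (by norm_num : (0:ℝ) ≤ 1)] at hx
      have hx0 := hx.1
      have hx1 := hx.2
      have h1 : (s * x) ^ (p - 1) = s ^ (p - 1) * x ^ (p - 1) :=
        Real.mul_rpow (le_of_lt hs) hx0
      have h2 : (s - s * x) ^ (q - 1) = s ^ (q - 1) * (1 - x) ^ (q - 1) := by
        rw [show s - s * x = s * (1 - x) by ring, Real.mul_rpow (le_of_lt hs) (by linarith)]
      rw [h1, h2]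
      have h3 : s ^ (p - 1) * s ^ (q - 1) = s ^ (p + q - 2) := by
        rw [← Real.rpow_add hs]; congr 1; ring
      calc s ^ (p - 1) * x ^ (p - 1) * (s ^ (q - 1) * (1 - x) ^ (q - 1))
          = (s ^ (p - 1) * s ^ (q - 1)) * (x ^ (p - 1) * (1 - x) ^ (q - 1)) := by ring
        _ = s ^ (p + q - 2) * (x ^ (p - 1) * (1 - x) ^ (q - 1)) := by rw [h3]
    rw [intervalIntegral.integral_congr hcongr, intervalIntegral.integral_const_mul,
      beta01_integral hp hq]
  rw [hmid] at hsub
  rw [smul_eq_mul] at hsub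
  have hss : s * s ^ (p + q - 2) = s ^ (p + q - 1) := by
    nth_rewrite 1 [← Real.rpow_one s]
    rw [← Real.rpow_add hs]; congr 1; ring
  have hI : ∫ u in (0:ℝ)..s, u ^ (p - 1) * (s - u) ^ (q - 1)
      = s * (s ^ (p + q - 2) * Beta2 p q) := by
    rw [hsub]; field_simp
  rw [hI, ← mul_assoc, hss]; ring
end Beta

section Interchange
open Real MeasureTheory Set

lemma kernel_measurable (p q s : ℝ) :
    Measurable (fun u : ℝ => u ^ (p - 1) * (s - u) ^ (q - 1)) := by fun_prop

lemma kernel_nonneg {p q s : ℝ} {u : ℝ} (hu : u ∈ Ioc (0:ℝ) s) :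
    0 ≤ u ^ (p - 1) * (s - u) ^ (q - 1) := by
  have h1 : (0:ℝ) ≤ u := le_of_lt hu.1
  have h2 : (0:ℝ) ≤ s - u := by linarith [hu.2]
  positivity

lemma kernel_integrableOn {p q : ℝ} (hp : 0 < p) (hq : 0 < q) {s : ℝ} (hs : 0 < s) :
    IntegrableOn (fun u : ℝ => u ^ (p - 1) * (s - u) ^ (q - 1)) (Ioc 0 s) volume :=
  (intervalIntegrable_iff_integrableOn_Ioc_of_le (le_of_lt hs)).mp
    (beta_scaled_intervalIntegrable hp hq hs)

lemma kernel_setIntegral {p q : ℝ} (hp : 0 < p) (hq : 0 < q) {s : ℝ} (hs : 0 < s) :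
    ∫ u in Ioc (0:ℝ) s, u ^ (p - 1) * (s - u) ^ (q - 1)
      = Beta2 p q * s ^ (p + q - 1) := by
  rw [← intervalIntegral.integral_of_le (le_of_lt hs)]
  exact beta_scaled_integral hp hq hs

/-- Master interchange lemma: swapping `∑'` and `∫` against the Beta kernel. -/
lemma interchange_beta {p q : ℝ} (hp : 0 < p) (hq : 0 < q) {s : ℝ} (hs : 0 < s)
    (G : ℕ → ℝ → ℝ) (M : ℕ → ℝ)
    (hGm : ∀ i, AEStronglyMeasurable (G i) (volume.restrict (Ioc 0 s)))
    (hGb : ∀ i, ∀ u ∈ Ioc (0:ℝ) s, |G i u| ≤ M i)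
    (hM : Summable M) :
    ∫ u in Ioc (0:ℝ) s, (u ^ (p - 1) * (s - u) ^ (q - 1) * ∑' i, G i u)
      = ∑' i, ∫ u in Ioc (0:ℝ) s, u ^ (p - 1) * (s - u) ^ (q - 1) * G i u := by
  set K : ℝ → ℝ := fun u => u ^ (p - 1) * (s - u) ^ (q - 1) with hK
  have hM0 : ∀ i, 0 ≤ M i := fun i =>
    le_trans (abs_nonneg _) (hGb i s ⟨hs, le_refl s⟩)
  set I0 : ℝ := Beta2 p q * s ^ (p + q - 1) with hI0
  have hI0pos : 0 < I0 := by
    have := Beta2_pos hp hq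
    have := Real.rpow_pos_of_pos hs (p + q - 1)
    positivity
  have hKint : IntegrableOn K (Ioc 0 s) volume := kernel_integrableOn hp hq hs
  have hfm : ∀ i : ℕ, AEStronglyMeasurable (fun u => K u * G i u)
      (volume.restrict (Ioc 0 s)) := fun i =>
    ((kernel_measurable p q s).aestronglyMeasurable).mul (hGm i)
  have hlint : ∀ i : ℕ, (∫⁻ u in Ioc (0:ℝ) s, ‖K u * G i u‖₊)
      ≤ ENNReal.ofReal (M i * I0) := by
    intro i
    have step1 : (∫⁻ u in Ioc (0:ℝ) s, ‖K u * G i u‖₊)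
        ≤ ∫⁻ u in Ioc (0:ℝ) s, ENNReal.ofReal (M i * K u) := by
      refine lintegral_mono_ae ?_
      refine ae_restrict_of_forall_mem measurableSet_Ioc fun u hu => ?_
      rw [← ENNReal.ofReal_coe_nnreal, coe_nnnorm]
      refine ENNReal.ofReal_le_ofReal ?_
      rw [Real.norm_eq_abs, abs_mul, abs_of_nonneg (kernel_nonneg hu)]
      calc K u * |G i u| ≤ K u * M i :=
            mul_le_mul_of_nonneg_left (hGb i u hu) (kernel_nonneg hu)
        _ = M i * K u := by ring
    have step2 : (∫⁻ u in Ioc (0:ℝ) s, ENNReal.ofReal (M i * K u))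
        = ENNReal.ofReal (M i * I0) := by
      rw [← MeasureTheory.ofReal_integral_eq_lintegral_ofReal
        (hKint.const_mul (M i))
        (ae_restrict_of_forall_mem measurableSet_Ioc fun u hu => by
          have := kernel_nonneg (p := p) (q := q) hu
          exact mul_nonneg (hM0 i) this)]
      rw [MeasureTheory.integral_const_mul, kernel_setIntegral hp hq hs]
    exact le_trans step1 (le_of_eq step2)
  have hsumM : Summable (fun i => M i * I0) := hM.mul_right I0
  have hne : (∑' i, ∫⁻ u in Ioc (0:ℝ) s, ‖K u * G i u‖₊) ≠ ⊤ := by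
    refine ne_top_of_le_ne_top ?_ (ENNReal.tsum_le_tsum hlint)
    rw [← ENNReal.ofReal_tsum_of_nonneg (fun i => mul_nonneg (hM0 i) (le_of_lt hI0pos)) hsumM]
    exact ENNReal.ofReal_ne_top
  have key := MeasureTheory.integral_tsum hfm hne
  rw [← key]
  refine MeasureTheory.integral_congr_ae (Filter.EventuallyEq.symm ?_)
  refine ae_restrict_of_forall_mem measurableSet_Ioc fun u _ => ?_
  exact tsum_mul_left

/-- Evaluation of the Beta-kernel integral against a monomial. -/
lemma beta_eval_pow {p q : ℝ} (hp : 0 < p) (hq : 0 < q) {s : ℝ} (hs : 0 < s)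
    (D : ℝ) (i : ℕ) :
    ∫ u in Ioc (0:ℝ) s, u ^ (p - 1) * (s - u) ^ (q - 1) * (D * u ^ i)
      = D * (Beta2 (p + i) q * s ^ (p + i + q - 1)) := by
  have hpi : (0:ℝ) < p + i := by positivity
  have hcongr : ∀ u ∈ Ioc (0:ℝ) s,
      u ^ (p - 1) * (s - u) ^ (q - 1) * (D * u ^ i)
        = D * (u ^ (p + i - 1) * (s - u) ^ (q - 1)) := by
    intro u hu
    have hu0 : 0 < u := hu.1
    have h1 : u ^ (p - 1) * u ^ (i : ℕ) = u ^ (p + i - 1) := by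
      rw [← Real.rpow_natCast u i, ← Real.rpow_add hu0]
      congr 1
      ring
    calc u ^ (p - 1) * (s - u) ^ (q - 1) * (D * u ^ i)
        = D * ((u ^ (p - 1) * u ^ (i:ℕ)) * (s - u) ^ (q - 1)) := by ring
      _ = D * (u ^ (p + i - 1) * (s - u) ^ (q - 1)) := by rw [h1]
  rw [MeasureTheory.setIntegral_congr_fun measurableSet_Ioc hcongr,
    MeasureTheory.integral_const_mul, kernel_setIntegral hpi hq hs]

end Interchange

section Part1
open Real

lemma antidiag_sum_eq {q s t : ℝ} (n : ℕ) :
    ∑ ij ∈ Finset.HasAntidiagonal.antidiagonal n,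
        poch q (ij.1 + ij.2) / ((Nat.factorial ij.1 : ℝ) * (Nat.factorial ij.2 : ℝ))
          * s ^ ij.1 * t ^ ij.2
      = poch q n / (Nat.factorial n : ℝ) * (s + t) ^ n := by
  rw [Finset.Nat.sum_antidiagonal_eq_sum_range_succ_mk, add_pow]
  rw [Finset.mul_sum]
  refine Finset.sum_congr rfl fun k hk => ?_
  have hkn : k ≤ n := Nat.lt_succ_iff.mp (Finset.mem_range.mp hk)
  rw [Nat.add_sub_cancel' hkn]
  have hfact : (Nat.choose n k : ℝ) * (Nat.factorial k : ℝ) * (Nat.factorial (n - k) : ℝ)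
      = (Nat.factorial n : ℝ) := by
    rw [← Nat.cast_mul, ← Nat.cast_mul, Nat.choose_mul_factorial_mul_factorial hkn]
  have h1 : (0:ℝ) < Nat.factorial k := by positivity
  have h2 : (0:ℝ) < Nat.factorial (n - k) := by positivity
  have h3 : (0:ℝ) < Nat.factorial n := by positivity
  field_simp
  rw [← hfact]
  ring

lemma summable_F2_majorant {q s t : ℝ} (hq : 0 < q) (hs : 0 < s) (ht : 0 < t)
    (hst : s + t < 1) :
    Summable (fun p : ℕ × ℕ =>
      poch q (p.1 + p.2) / ((Nat.factorial p.1 : ℝ) * (Nat.factorial p.2 : ℝ))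
        * s ^ p.1 * t ^ p.2) := by
  set g : ℕ × ℕ → ℝ := fun p =>
    poch q (p.1 + p.2) / ((Nat.factorial p.1 : ℝ) * (Nat.factorial p.2 : ℝ))
      * s ^ p.1 * t ^ p.2 with hg
  rw [← Finset.HasAntidiagonal.sigmaAntidiagonalEquivProd.summable_iff]
  have hnn : ∀ x : (Σ n : ℕ, {x // x ∈ Finset.HasAntidiagonal.antidiagonal n}),
      0 ≤ (g ∘ Finset.HasAntidiagonal.sigmaAntidiagonalEquivProd) x := by
    rintro ⟨n, ⟨⟨i, j⟩, h⟩⟩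
    have := poch_pos hq (i + j)
    have h1 : (0:ℝ) < Nat.factorial i := by positivity
    have h2 : (0:ℝ) < Nat.factorial j := by positivity
    simp only [hg, Function.comp_apply, Finset.HasAntidiagonal.sigmaAntidiagonalEquivProd_apply]
    positivity
  refine (summable_sigma_of_nonneg hnn).mpr ⟨fun n => ?_, ?_⟩
  · exact Summable.of_finite
  · have hfib : ∀ n : ℕ, (∑' y : {x // x ∈ Finset.HasAntidiagonal.antidiagonal n},
        (g ∘ Finset.HasAntidiagonal.sigmaAntidiagonalEquivProd) ⟨n, y⟩)
          = poch q n / (Nat.factorial n : ℝ) * (s + t) ^ n := by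
      intro n
      have : (∑' y : {x // x ∈ Finset.HasAntidiagonal.antidiagonal n},
          (g ∘ Finset.HasAntidiagonal.sigmaAntidiagonalEquivProd) ⟨n, y⟩)
            = ∑ ij ∈ Finset.HasAntidiagonal.antidiagonal n, g ij := by
        rw [← Finset.tsum_subtype]
        exact tsum_congr fun y => rfl
      rw [this]
      exact antidiag_sum_eq (q := q) (s := s) (t := t) n
    rw [funext hfib]
    exact (summable_poch_mul hq (by linarith) hst 0).congr fun n => by rw [Nat.add_zero]
end Part1

section Expand
open Real

/-- Binomial expansion of `(w - u) ^ (-e)` for `0 < u < w`, `w ≤ 1`-free version. -/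
lemma expand_inner {e w u : ℝ} (hw : 0 < w) (hu : 0 < u) (huw : u < w) :
    (w - u) ^ (-e) = ∑' i : ℕ, (poch e i / (Nat.factorial i : ℝ) * w ^ (-e - i)) * u ^ i := by
  have hx0 : 0 < u / w := by positivity
  have hx1 : u / w < 1 := (div_lt_one hw).mpr huw
  have hbin := (hasSum_binomial e hx0 hx1).tsum_eq
  have hfac : w - u = w * (1 - u / w) := by field_simp
  have h1uw : 0 < 1 - u / w := by linarith
  rw [hfac, Real.mul_rpow (le_of_lt hw) (le_of_lt h1uw), ← hbin, ← tsum_mul_left]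
  refine tsum_congr fun i => ?_
  have h2 : (u / w) ^ i = u ^ i * (w ^ i)⁻¹ := by
    rw [div_pow]
    ring
  have h3 : w ^ (-e) * (w ^ i)⁻¹ = w ^ (-e - i) := by
    rw [← Real.rpow_natCast w i, ← Real.rpow_neg (le_of_lt hw),
      ← Real.rpow_add hw]
    congr 1 <;> ring
  calc w ^ (-e) * (poch e i / (Nat.factorial i : ℝ) * (u / w) ^ i)
      = (w ^ (-e) * (w ^ i)⁻¹) * (poch e i / (Nat.factorial i : ℝ)) * u ^ i := by
        rw [h2]; ring
    _ = (poch e i / (Nat.factorial i : ℝ) * w ^ (-e - i)) * u ^ i := by rw [h3]; ring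

/-- Bound `w^(-e-i) ≤ max 1 (m^(-e)) * m^(-i)` for `0 < m ≤ w ≤ 1`. -/
lemma rpow_neg_bound {e m w : ℝ} (hm : 0 < m) (hmw : m ≤ w) (hw1 : w ≤ 1) (i : ℕ) :
    w ^ (-e - i) ≤ max 1 (m ^ (-e)) * m ^ (-(i:ℝ)) := by
  have hw : 0 < w := lt_of_lt_of_le hm hmw
  have hsplit : w ^ (-e - i) = w ^ (-e) * w ^ (-(i:ℝ)) := by
    rw [← Real.rpow_add hw]
    congr 1 <;> ring
  rw [hsplit]
  have h1 : w ^ (-e) ≤ max 1 (m ^ (-e)) := by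
    rcases le_or_gt 0 (-e) with he | he
    · exact le_trans (Real.rpow_le_one (le_of_lt hw) hw1 he) (le_max_left _ _)
    · exact le_trans (Real.rpow_le_rpow_of_nonpos hm hmw (le_of_lt he)) (le_max_right _ _)
  have h2 : w ^ (-(i:ℝ)) ≤ m ^ (-(i:ℝ)) :=
    Real.rpow_le_rpow_of_nonpos hm hmw (neg_nonpos.mpr (Nat.cast_nonneg i))
  exact mul_le_mul h1 h2 (Real.rpow_nonneg (le_of_lt hw) _) (le_trans zero_le_one (le_max_left _ _))

end Expand

open Real MeasureTheory Set intervalIntegral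

/-- The integral `I₁(s,t)` evaluates to
`B(a,c)B(b,d) s^{a+c-1} t^{b+d-1} F₂(e; a, b; a+c, b+d; s, t)`,
the `F₂` series converging since `s + t < 1`. -/
theorem stmt9 (a b c d e : ℝ) (ha : 0 < a) (hb : 0 < b) (hc : 0 < c) (hd : 0 < d)
    (s t : ℝ) (hs0 : 0 < s) (hs1 : s < 1) (ht0 : 0 < t) (ht1 : t < 1 - s) :
    Summable (fun p : ℕ × ℕ =>
        poch e (p.1 + p.2) * poch a p.1 * poch b p.2 /
          (poch (a + c) p.1 * poch (b + d) p.2 *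
            (Nat.factorial p.1 : ℝ) * (Nat.factorial p.2 : ℝ)) * s ^ p.1 * t ^ p.2)
    ∧ (∫ v in (0:ℝ)..t,
          (∫ u in (0:ℝ)..s, u ^ (a - 1) * (s - u) ^ (c - 1) * (1 - u - v) ^ (-e)) *
            v ^ (b - 1) * (t - v) ^ (d - 1))
      = Beta2 a c * Beta2 b d * s ^ (a + c - 1) * t ^ (b + d - 1) *
          F2 e a b (a + c) (b + d) s t := by
  have hac : (0:ℝ) < a + c := by linarith
  have hbd : (0:ℝ) < b + d := by linarith
  have ht1' : t < 1 := by linarith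
  have hst : s < 1 - t := by linarith
  have h1t : (0:ℝ) < 1 - t := by linarith
  constructor
  · -- Part 1 : summability
    refine Summable.of_norm_bounded
      (summable_F2_majorant (q := |e| + 1) (by positivity) hs0 ht0 (by linarith)) ?_
    rintro ⟨i, j⟩
    simp only [Real.norm_eq_abs]
    have hpaci := poch_pos hac i
    have hpbdj := poch_pos hbd j
    have hpai := poch_pos ha i
    have hpbj := poch_pos hb j
    have hfi : (0:ℝ) < Nat.factorial i := by positivity
    have hfj : (0:ℝ) < Nat.factorial j := by positivity
    have hsi : (0:ℝ) < s ^ i := by positivity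
    have htj : (0:ℝ) < t ^ j := by positivity
    set R : ℝ := poch a i * poch b j /
        (poch (a + c) i * poch (b + d) j * (Nat.factorial i : ℝ) * (Nat.factorial j : ℝ))
        * s ^ i * t ^ j with hR
    have hrw : poch e (i + j) * poch a i * poch b j /
        (poch (a + c) i * poch (b + d) j * (Nat.factorial i : ℝ) * (Nat.factorial j : ℝ))
        * s ^ i * t ^ j = poch e (i + j) * R := by
      rw [hR]; ring
    have hRnn : 0 ≤ R := by positivity
    rw [hrw, abs_mul, abs_of_nonneg hRnn]
    have hRle : R ≤ 1 / ((Nat.factorial i : ℝ) * (Nat.factorial j : ℝ)) * s ^ i * t ^ j := by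
      rw [hR]
      gcongr ?_ * s ^ i * t ^ j
      rw [div_le_div_iff₀ (by positivity) (by positivity)]
      have h1 : poch a i ≤ poch (a + c) i := poch_le_poch ha (le_of_lt hc) i
      have h2 : poch b j ≤ poch (b + d) j := poch_le_poch hb (le_of_lt hd) j
      calc poch a i * poch b j * ((Nat.factorial i : ℝ) * (Nat.factorial j : ℝ))
          ≤ poch (a + c) i * poch (b + d) j * ((Nat.factorial i : ℝ) * (Nat.factorial j : ℝ)) := by
            gcongr
        _ = 1 * (poch (a + c) i * poch (b + d) j * (Nat.factorial i : ℝ) * (Nat.factorial j : ℝ)) := by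
            ring
    calc |poch e (i + j)| * R ≤ poch (|e| + 1) (i + j) *
          (1 / ((Nat.factorial i : ℝ) * (Nat.factorial j : ℝ)) * s ^ i * t ^ j) :=
        mul_le_mul (abs_poch_le e (i + j)) hRle hRnn (le_of_lt (poch_pos (by positivity) (i + j)))
      _ = poch (|e| + 1) (i + j) / ((Nat.factorial i : ℝ) * (Nat.factorial j : ℝ))
          * s ^ i * t ^ j := by ring
  · -- Part 2 : the integral evaluation
    set E : ℕ → ℝ := fun i =>
      poch e i / (Nat.factorial i : ℝ) * (Beta2 (a + i) c * s ^ (a + i + c - 1)) with hE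
    -- Step 1 : inner integral
    have step_inner : ∀ v ∈ Ioc (0:ℝ) t,
        (∫ u in (0:ℝ)..s, u ^ (a - 1) * (s - u) ^ (c - 1) * (1 - u - v) ^ (-e))
          = ∑' i : ℕ, E i * (1 - v) ^ (-e - i) := by
      intro v hv
      have hv0 : 0 < v := hv.1
      have hw : 0 < 1 - v := by linarith [hv.2]
      have hsw : s < 1 - v := by linarith [hv.2]
      have hsw' : s / (1 - v) < 1 := (div_lt_one hw).mpr hsw
      rw [intervalIntegral.integral_of_le (le_of_lt hs0)]
      have hcong : ∀ u ∈ Ioc (0:ℝ) s,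
          u ^ (a - 1) * (s - u) ^ (c - 1) * (1 - u - v) ^ (-e)
            = u ^ (a - 1) * (s - u) ^ (c - 1) *
              ∑' i : ℕ, (poch e i / (Nat.factorial i : ℝ) * (1 - v) ^ (-e - i)) * u ^ i := by
        intro u hu
        rw [show (1:ℝ) - u - v = (1 - v) - u by ring,
          expand_inner hw hu.1 (lt_of_le_of_lt hu.2 hsw)]
      rw [MeasureTheory.setIntegral_congr_fun measurableSet_Ioc hcong]
      rw [interchange_beta ha hc hs0
        (fun i u => (poch e i / (Nat.factorial i : ℝ) * (1 - v) ^ (-e - i)) * u ^ i)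
        (fun i => |poch e i / (Nat.factorial i : ℝ) * (1 - v) ^ (-e - i)| * s ^ i)
        (fun i => (((measurable_id.pow_const i).const_mul _).aestronglyMeasurable))
        (fun i u hu => by
          rw [abs_mul, abs_pow, abs_of_pos hu.1]
          exact mul_le_mul_of_nonneg_left (pow_le_pow_left₀ (le_of_lt hu.1) hu.2 i)
            (abs_nonneg _))
        ?_]
      · refine tsum_congr fun i => ?_
        rw [beta_eval_pow ha hc hs0]
        rw [hE]
        ring
      · -- summability of the M-sequence
        refine (((summable_abs_poch e (x := s / (1 - v)) (by positivity) hsw').mul_left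
          ((1 - v) ^ (-e))).congr fun i => ?_)
        have hfi : (0:ℝ) < Nat.factorial i := by positivity
        have hwe : (0:ℝ) < (1 - v) ^ (-e - i) := Real.rpow_pos_of_pos hw _
        rw [abs_mul, abs_div, Nat.abs_cast, abs_of_pos hwe]
        rw [div_pow, ← rpow_shift hw e i]
        ring
    -- Step 2 : outer integral, first interchange
    set Mw : ℝ := max 1 ((1 - t) ^ (-e)) with hMw
    have hMw0 : 0 < Mw := lt_of_lt_of_le one_pos (le_max_left _ _)
    rw [intervalIntegral.integral_of_le (le_of_lt ht0)]
    have hcong2 : ∀ v ∈ Ioc (0:ℝ) t,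
        (∫ u in (0:ℝ)..s, u ^ (a - 1) * (s - u) ^ (c - 1) * (1 - u - v) ^ (-e)) *
            v ^ (b - 1) * (t - v) ^ (d - 1)
          = v ^ (b - 1) * (t - v) ^ (d - 1) * ∑' i : ℕ, E i * (1 - v) ^ (-e - i) := by
      intro v hv
      rw [step_inner v hv]
      ring
    rw [MeasureTheory.setIntegral_congr_fun measurableSet_Ioc hcong2]
    rw [interchange_beta hb hd ht0
      (fun i v => E i * (1 - v) ^ (-e - i))
      (fun i => |E i| * (Mw * (1 - t) ^ (-(i:ℝ))))
      (fun i => ((by fun_prop : Measurable fun v : ℝ => E i * (1 - v) ^ (-e - (i:ℝ)))).aestronglyMeasurable)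
      (fun i v hv => by
        have hw : 0 < 1 - v := by linarith [hv.2]
        rw [abs_mul, abs_of_pos (Real.rpow_pos_of_pos hw _)]
        refine mul_le_mul_of_nonneg_left ?_ (abs_nonneg _)
        exact rpow_neg_bound h1t (by linarith [hv.2]) (by linarith [hv.1]) i)
      ?_]
    swap
    · -- summability of M2
      have hmaj := ((summable_abs_poch e (x := s / (1 - t)) (by positivity)
        ((div_lt_one h1t).mpr hst)).mul_left (Beta2 a c * s ^ (a + c - 1) * Mw))
      refine Summable.of_nonneg_of_le (fun i => by positivity) (fun i => ?_) hmaj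
      have hfi : (0:ℝ) < Nat.factorial i := by positivity
      have hBpos : 0 < Beta2 (a + i) c := Beta2_pos (by positivity) hc
      have hspos : (0:ℝ) < s ^ (a + i + c - 1) := Real.rpow_pos_of_pos hs0 _
      have hEabs : |E i| = |poch e i| / (Nat.factorial i : ℝ)
          * (Beta2 (a + i) c * s ^ (a + i + c - 1)) := by
        rw [hE, abs_mul, abs_div, Nat.abs_cast, abs_of_pos (mul_pos hBpos hspos)]
      have hBle : Beta2 (a + i) c ≤ Beta2 a c := by
        rw [Beta2_shift ha hc i]
        have h1 : poch a i / poch (a + c) i ≤ 1 :=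
          (div_le_one (poch_pos hac i)).mpr (poch_le_poch ha (le_of_lt hc) i)
        calc Beta2 a c * (poch a i / poch (a + c) i) ≤ Beta2 a c * 1 :=
              mul_le_mul_of_nonneg_left h1 (le_of_lt (Beta2_pos ha hc))
          _ = Beta2 a c := mul_one _
      have hsplit : s ^ (a + i + c - 1) = s ^ (a + c - 1) * s ^ i := by
        rw [← rpow_split hs0 (a + c - 1) i]
        congr 1
        ring
      have hratio : s ^ i * (1 - t) ^ (-(i:ℝ)) = (s / (1 - t)) ^ i := by
        rw [rpow_neg_natCast h1t, div_pow]
        ring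
      rw [hEabs, hsplit]
      calc |poch e i| / (Nat.factorial i : ℝ) * (Beta2 (a + i) c * (s ^ (a + c - 1) * s ^ i))
            * (Mw * (1 - t) ^ (-(i:ℝ)))
          = (Beta2 (a + i) c * s ^ (a + c - 1) * Mw) *
            (|poch e i| / (Nat.factorial i : ℝ) * (s ^ i * (1 - t) ^ (-(i:ℝ)))) := by ring
        _ ≤ (Beta2 a c * s ^ (a + c - 1) * Mw) *
            (|poch e i| / (Nat.factorial i : ℝ) * (s ^ i * (1 - t) ^ (-(i:ℝ)))) := by
            have hnn : 0 ≤ |poch e i| / (Nat.factorial i : ℝ) * (s ^ i * (1 - t) ^ (-(i:ℝ))) := by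
              have : (0:ℝ) < (1 - t) ^ (-(i:ℝ)) := Real.rpow_pos_of_pos h1t _
              positivity
            gcongr
        _ = (Beta2 a c * s ^ (a + c - 1) * Mw) *
            (|poch e i| / (Nat.factorial i : ℝ) * (s / (1 - t)) ^ i) := by rw [hratio]
    -- Step 3 : evaluate each outer integral by a second expansion
    have step_i : ∀ i : ℕ,
        (∫ v in Ioc (0:ℝ) t, v ^ (b - 1) * (t - v) ^ (d - 1) * (E i * (1 - v) ^ (-e - i)))
          = ∑' j : ℕ, (E i * (poch (e + i) j / (Nat.factorial j : ℝ)))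
              * (Beta2 (b + j) d * t ^ (b + j + d - 1)) := by
      intro i
      have hcong3 : ∀ v ∈ Ioc (0:ℝ) t,
          v ^ (b - 1) * (t - v) ^ (d - 1) * (E i * (1 - v) ^ (-e - i))
            = v ^ (b - 1) * (t - v) ^ (d - 1) *
              ∑' j : ℕ, (E i * (poch (e + i) j / (Nat.factorial j : ℝ))) * v ^ j := by
        intro v hv
        have hbin := (hasSum_binomial (e + i) hv.1 (lt_of_le_of_lt hv.2 ht1')).tsum_eq
        rw [show -e - (i:ℝ) = -(e + i) by ring, ← hbin, ← tsum_mul_left]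
        congr 1
        refine tsum_congr fun j => ?_
        ring
      rw [MeasureTheory.setIntegral_congr_fun measurableSet_Ioc hcong3]
      rw [interchange_beta hb hd ht0
        (fun j v => (E i * (poch (e + i) j / (Nat.factorial j : ℝ))) * v ^ j)
        (fun j => |E i * (poch (e + i) j / (Nat.factorial j : ℝ))| * t ^ j)
        (fun j => (((measurable_id.pow_const j).const_mul _).aestronglyMeasurable))
        (fun j v hv => by
          rw [abs_mul, abs_pow, abs_of_pos hv.1]
          exact mul_le_mul_of_nonneg_left (pow_le_pow_left₀ (le_of_lt hv.1) hv.2 j)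
            (abs_nonneg _))
        ?_]
      · refine tsum_congr fun j => ?_
        rw [beta_eval_pow hb hd ht0]
      · refine (((summable_abs_poch (e + i) (x := t) ht0 ht1').mul_left |E i|).congr
          fun j => ?_)
        have hfj : (0:ℝ) < Nat.factorial j := by positivity
        have h1 : |E i * (poch (e + i) j / (Nat.factorial j : ℝ))|
            = |E i| * (|poch (e + i) j| / (Nat.factorial j : ℝ)) := by
          rw [abs_mul, abs_div, Nat.abs_cast]
        rw [h1]
        ring
    rw [tsum_congr step_i]
    -- Step 4 : algebraic identification with F2
    unfold F2
    rw [show Beta2 a c * Beta2 b d * s ^ (a + c - 1) * t ^ (b + d - 1) *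
        ∑' (i : ℕ) (j : ℕ),
          poch e (i + j) * poch a i * poch b j /
            (poch (a + c) i * poch (b + d) j * (Nat.factorial i : ℝ) * (Nat.factorial j : ℝ))
            * s ^ i * t ^ j
      = ∑' (i : ℕ), (Beta2 a c * Beta2 b d * s ^ (a + c - 1) * t ^ (b + d - 1) *
          ∑' (j : ℕ),
          poch e (i + j) * poch a i * poch b j /
            (poch (a + c) i * poch (b + d) j * (Nat.factorial i : ℝ) * (Nat.factorial j : ℝ))
            * s ^ i * t ^ j) from tsum_mul_left.symm]
    refine tsum_congr fun i => ?_
    rw [← tsum_mul_left]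
    refine tsum_congr fun j => ?_
    -- per-term identity
    have hfi : (0:ℝ) < Nat.factorial i := by positivity
    have hfj : (0:ℝ) < Nat.factorial j := by positivity
    have hpaci := (poch_pos hac i).ne'
    have hpbdj := (poch_pos hbd j).ne'
    simp only [hE]
    rw [Beta2_shift ha hc i, Beta2_shift hb hd j, poch_add e i j]
    have hsplit1 : s ^ (a + i + c - 1) = s ^ (a + c - 1) * s ^ i := by
      rw [← rpow_split hs0 (a + c - 1) i]; congr 1; ring
    have hsplit2 : t ^ (b + j + d - 1) = t ^ (b + d - 1) * t ^ j := by
      rw [← rpow_split ht0 (b + d - 1) j]; congr 1; ring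
    rw [hsplit1, hsplit2]
    field_simp
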